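/- (Saturation of the causal uncertainty relation.) Let d ≥ 2 and take the process comb J := |Φ_1⟩⟨Φ_1|_{AC} ⊗ I_B (which indeed satisfies Tr_C J = (I_A/d) ⊗ I_B). Then with identity unitaries, the common-cause indicator distribution of J is deterministic (p_i = δ_{i1}, so H(p) = 0) while the direct-cause indicator distribution is uniform (q_i = 1/d² for all i, so H(q) = 2 log₂ d); hence H(p) + H(q) = 2 log₂ d and the causal uncertainty bound is attained. -/

import Mathlib

open Matrix BigOperators ComplexOrder

noncomputable section

/-- Index type for the three systems A, B, C. -/
abbrev PIdx (dA dB dC : ℕ) := Fin dA × Fin dB × Fin dC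

/-- Matrices on `ℂ^{dA} ⊗ ℂ^{dB} ⊗ ℂ^{dC}`. -/
abbrev PMat (dA dB dC : ℕ) := Matrix (PIdx dA dB dC) (PIdx dA dB dC) ℂ

/-- Partial trace over the third (C) tensor factor. -/
def trC {dA dB dC : ℕ} (M : PMat dA dB dC) :
    Matrix (Fin dA × Fin dB) (Fin dA × Fin dB) ℂ :=
  Matrix.of fun i j => ∑ c : Fin dC, M (i.1, i.2, c) (j.1, j.2, c)

/-- Partial trace over the second tensor factor of a bipartite matrix. -/
def trSnd {d₁ d₂ : ℕ} (M : Matrix (Fin d₁ × Fin d₂) (Fin d₁ × Fin d₂) ℂ) :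
    Matrix (Fin d₁) (Fin d₁) ℂ :=
  Matrix.of fun a a' => ∑ b : Fin d₂, M (a, b) (a', b)

/-- A process comb: a PSD matrix `J` on A ⊗ B ⊗ C with `Tr_C J = ρ_A ⊗ I_B`
for some state `ρ_A`. -/
def IsProcessComb {dA dB dC : ℕ} (J : PMat dA dB dC) : Prop :=
  J.PosSemidef ∧ ∃ ρ : Matrix (Fin dA) (Fin dA) ℂ,
    ρ.PosSemidef ∧ ρ.trace = 1 ∧
    trC J = Matrix.of fun i j => ρ i.1 j.1 * (if i.2 = j.2 then (1 : ℂ) else 0)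

/-- A tester with `m` outcomes: PSD matrices `T x` with `∑ x, T x = Λ ⊗ I_C`
for some PSD `Λ` on A ⊗ B with `Tr_B Λ = I_A`. -/
def IsTester {dA dB dC m : ℕ} (T : Fin m → PMat dA dB dC) : Prop :=
  (∀ x, (T x).PosSemidef) ∧
  ∃ Λ : Matrix (Fin dA × Fin dB) (Fin dA × Fin dB) ℂ,
    Λ.PosSemidef ∧ trSnd Λ = 1 ∧
    (∑ x, T x) = Matrix.of fun i j =>
      Λ (i.1, i.2.1) (j.1, j.2.1) * (if i.2.2 = j.2.2 then (1 : ℂ) else 0)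

/-- Outcome probability `Tr[J T]` (as a real number). -/
def prob {dA dB dC : ℕ} (J T : PMat dA dB dC) : ℝ := ((J * T).trace).re

/-- `P_k`: Bob's optimal winning probability in the quantum roulette with `k` chips,
for the pair of testers `T`, `S`. -/
def rouletteP {dA dB dC m : ℕ} (T S : Fin m → PMat dA dB dC) (k : ℕ) : ℝ :=
  sSup { r : ℝ | ∃ J : PMat dA dB dC, IsProcessComb J ∧
    ∃ G : Finset (Fin 2 × Fin m), G.card = k ∧
      r = ∑ g ∈ G, (1 / 2 : ℝ) * prob J (if g.1 = 0 then T g.2 else S g.2) }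

/-- The roulette vector `w ∈ ℝ^{2m}`, `w_k = P_k - P_{k-1}`. -/
def rouletteW {dA dB dC m : ℕ} (T S : Fin m → PMat dA dB dC) : Fin (m + m) → ℝ :=
  fun k => rouletteP T S (k.1 + 1) - rouletteP T S k.1

/-- Sum of the `k` largest entries of a (nonnegative) vector, padding with zeros. -/
def kMaxSum {n : ℕ} (u : Fin n → ℝ) (k : ℕ) : ℝ :=
  sSup { r : ℝ | ∃ A : Finset (Fin n), A.card = min k n ∧ r = ∑ i ∈ A, u i }

/-- `MajorizedBy u v` means `u ≺ v`: every partial sum of the `k` largest entries of `u`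
is at most that of `v`, and the total sums agree. -/
def MajorizedBy {m n : ℕ} (u : Fin m → ℝ) (v : Fin n → ℝ) : Prop :=
  (∀ k : ℕ, kMaxSum u k ≤ kMaxSum v k) ∧ ∑ i, u i = ∑ i, v i

/-- Base-2 Shannon entropy of a finite vector. -/
def H2 {n : ℕ} (p : Fin n → ℝ) : ℝ := -∑ i, p i * Real.logb 2 (p i)

/-- Rank-one projector `|φ⟩⟨φ|` on a bipartite system. -/
def projMat {d : ℕ} (φ : Fin d × Fin d → ℂ) :
    Matrix (Fin d × Fin d) (Fin d × Fin d) ℂ :=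
  Matrix.of fun x y => φ x * (starRingEnd ℂ) (φ y)

/-- Embed an operator on A ⊗ C as an operator on A ⊗ B ⊗ C acting as the identity on B. -/
def embAC {d : ℕ} (M : Matrix (Fin d × Fin d) (Fin d × Fin d) ℂ) : PMat d d d :=
  Matrix.of fun i j => M (i.1, i.2.2) (j.1, j.2.2) * (if i.2.1 = j.2.1 then (1 : ℂ) else 0)

/-- Embed an operator on B ⊗ C as an operator on A ⊗ B ⊗ C acting as the identity on A. -/
def embBC {d : ℕ} (M : Matrix (Fin d × Fin d) (Fin d × Fin d) ℂ) : PMat d d d :=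
  Matrix.of fun i j => M (i.2.1, i.2.2) (j.2.1, j.2.2) * (if i.1 = j.1 then (1 : ℂ) else 0)

/-- `(U ⊗ V) |φ⟩` for a bipartite vector `φ`. -/
def kronVec {d : ℕ} (U V : Matrix (Fin d) (Fin d) ℂ) (φ : Fin d × Fin d → ℂ) :
    Fin d × Fin d → ℂ :=
  fun x => ∑ y : Fin d × Fin d, U x.1 y.1 * V x.2 y.2 * φ y

/-- An orthonormal basis `{Φ_i}` of `ℂ^d ⊗ ℂ^d` consisting of maximally entangled vectors,
with `Φ_1 = (1/√d) ∑_k |kk⟩`. -/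
def IsMaxEntBasis {d : ℕ} (Φ : Fin (d * d) → Fin d × Fin d → ℂ) : Prop :=
  (∀ i j, ∑ x : Fin d × Fin d, (starRingEnd ℂ) (Φ i x) * Φ j x
      = if i = j then (1 : ℂ) else 0) ∧
  (∀ i a a', ∑ b : Fin d, Φ i (a, b) * (starRingEnd ℂ) (Φ i (a', b))
      = if a = a' then (1 : ℂ) / d else 0) ∧
  (∀ i b b', ∑ a : Fin d, Φ i (a, b) * (starRingEnd ℂ) (Φ i (a, b'))
      = if b = b' then (1 : ℂ) / d else 0) ∧
  ∀ (h : 0 < d * d) (x : Fin d × Fin d),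
    Φ ⟨0, h⟩ x = if x.1 = x.2 then ((1 / Real.sqrt d : ℝ) : ℂ) else 0

/-- Outcome distribution of the common-cause indicator `T_CC(U₁, U₂)` on a process comb:
`p_i = (1/d) Tr[J ((U₁⊗U₂)|Φ_i⟩⟨Φ_i|(U₁⊗U₂)†)_{AC} ⊗ I_B]`. -/
def ccProb {d : ℕ} (U₁ U₂ : Matrix (Fin d) (Fin d) ℂ)
    (Φ : Fin (d * d) → Fin d × Fin d → ℂ) (J : PMat d d d) : Fin (d * d) → ℝ :=
  fun i => (1 / d) * prob J (embAC (projMat (kronVec U₁ U₂ (Φ i))))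

/-- Outcome distribution of the direct-cause indicator `T_DC(U₃, U₄)` on a process comb:
`q_i = (1/d) Tr[J (I_A ⊗ ((U₃⊗U₄)|Φ_i⟩⟨Φ_i|(U₃⊗U₄)†)_{BC})]`. -/
def dcProb {d : ℕ} (U₃ U₄ : Matrix (Fin d) (Fin d) ℂ)
    (Φ : Fin (d * d) → Fin d × Fin d → ℂ) (J : PMat d d d) : Fin (d * d) → ℝ :=
  fun i => (1 / d) * prob J (embBC (projMat (kronVec U₃ U₄ (Φ i))))

/-- helper: sum of an `if`-constant. -/
lemma sum_ite_const' {α : Type*} [Fintype α] (p : Prop) [Decidable p] (f : α → ℂ) :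
    ∑ x, (if p then f x else 0) = if p then ∑ x, f x else 0 := by
  split <;> simp

lemma kronVec_one_one' {d : ℕ} (φ : Fin d × Fin d → ℂ) :
    kronVec (1 : Matrix (Fin d) (Fin d) ℂ) 1 φ = φ := by
  funext x
  simp only [kronVec, Matrix.one_apply, Fintype.sum_prod_type, ite_mul, one_mul, zero_mul,
    mul_ite, mul_one, mul_zero]
  simp [Finset.sum_ite_eq]

lemma reorder4' {d : ℕ} (t : Fin d → Fin d → Fin d → Fin d → ℂ) :
    (∑ a, ∑ b, ∑ c, ∑ c', t a b c c') = ∑ c, ∑ c', ∑ a, ∑ b, t a b c c' :=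
  calc (∑ a, ∑ b, ∑ c, ∑ c', t a b c c')
      = ∑ a, ∑ c, ∑ b, ∑ c', t a b c c' :=
        Finset.sum_congr rfl fun _ _ => Finset.sum_comm
    _ = ∑ a, ∑ c, ∑ c', ∑ b, t a b c c' :=
        Finset.sum_congr rfl fun _ _ => Finset.sum_congr rfl fun _ _ => Finset.sum_comm
    _ = ∑ c, ∑ a, ∑ c', ∑ b, t a b c c' := Finset.sum_comm
    _ = ∑ c, ∑ c', ∑ a, ∑ b, t a b c c' :=
        Finset.sum_congr rfl fun _ _ => Finset.sum_comm

lemma mixed_trace' {d : ℕ} (φ ψ : Fin d × Fin d → ℂ)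
    (hφ : ∀ c c' : Fin d, ∑ a, φ (a, c) * (starRingEnd ℂ) (φ (a, c'))
      = if c = c' then (1 : ℂ) / d else 0)
    (hψ : ∑ x : Fin d × Fin d, (starRingEnd ℂ) (ψ x) * ψ x = 1) :
    (embAC (projMat φ) * embBC (projMat ψ)).trace = 1 / d := by
  simp only [Matrix.trace, Matrix.diag, Matrix.mul_apply, embAC, embBC, projMat,
    Matrix.of_apply, Fintype.sum_prod_type, mul_ite, ite_mul, mul_one, one_mul,
    mul_zero, zero_mul, sum_ite_const', Finset.sum_ite_eq, Finset.sum_ite_eq',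
    Finset.mem_univ, if_true]
  rw [reorder4']
  have key : ∀ c c' : Fin d,
      (∑ a, ∑ b, φ (a, c) * (starRingEnd ℂ) (φ (a, c'))
        * (ψ (b, c') * (starRingEnd ℂ) (ψ (b, c))))
      = (if c = c' then (1 : ℂ) / d else 0)
        * ∑ b, ψ (b, c') * (starRingEnd ℂ) (ψ (b, c)) := by
    intro c c'
    rw [← hφ c c', Finset.sum_mul]
    exact Finset.sum_congr rfl fun a _ => (Finset.mul_sum _ _ _).symm
  simp only [key, ite_mul, zero_mul, sum_ite_const', Finset.sum_ite_eq,
    Finset.mem_univ, if_true]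
  have h2 : ∀ c : Fin d, (1 : ℂ) / d * ∑ b, ψ (b, c) * (starRingEnd ℂ) (ψ (b, c))
      = (1 : ℂ) / d * ∑ b, (starRingEnd ℂ) (ψ (b, c)) * ψ (b, c) := by
    intro c; congr 1; exact Finset.sum_congr rfl fun b _ => mul_comm _ _
  rw [Finset.sum_congr rfl fun c _ => h2 c, ← Finset.mul_sum]
  rw [Finset.sum_comm]
  rw [Fintype.sum_prod_type] at hψ
  rw [hψ, mul_one]

lemma cc_trace' {d : ℕ} (φ ψ : Fin d × Fin d → ℂ) :
    (embAC (projMat φ) * embAC (projMat ψ)).trace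
      = (d : ℂ) * ((∑ x : Fin d × Fin d, (starRingEnd ℂ) (ψ x) * φ x)
        * (∑ x : Fin d × Fin d, (starRingEnd ℂ) (φ x) * ψ x)) := by
  simp only [Matrix.trace, Matrix.diag, Matrix.mul_apply, embAC, projMat,
    Matrix.of_apply, Fintype.sum_prod_type, mul_ite, ite_mul, mul_one, one_mul,
    mul_zero, zero_mul, sum_ite_const', Finset.sum_ite_eq, Finset.sum_ite_eq',
    Finset.mem_univ, if_true]
  have hconst : ∀ f : ℂ, (∑ _x : Fin d, f) = (d : ℂ) * f := by
    intro f
    simp [Finset.sum_const, Finset.card_univ, nsmul_eq_mul]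
  simp only [hconst]
  rw [← Finset.mul_sum]
  congr 1
  rw [Finset.sum_mul_sum]
  refine Finset.sum_congr rfl fun a _ => ?_
  rw [Finset.sum_comm]
  refine Finset.sum_congr rfl fun a' _ => ?_
  rw [Finset.sum_mul_sum]
  refine Finset.sum_congr rfl fun c _ => Finset.sum_congr rfl fun c' _ => by ring

lemma embAC_proj_posSemidef' {d : ℕ} (φ : Fin d × Fin d → ℂ) :
    (embAC (projMat φ)).PosSemidef := by
  have hfac : embAC (projMat φ)
      = (Matrix.of fun (b₀ : Fin d) (i : PIdx d d d) =>
          if i.2.1 = b₀ then (starRingEnd ℂ) (φ (i.1, i.2.2)) else 0)ᴴ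
        * (Matrix.of fun (b₀ : Fin d) (i : PIdx d d d) =>
          if i.2.1 = b₀ then (starRingEnd ℂ) (φ (i.1, i.2.2)) else 0) := by
    ext i j
    simp only [Matrix.mul_apply, Matrix.conjTranspose_apply, Matrix.of_apply, embAC, projMat,
      apply_ite, star_zero, ite_mul, zero_mul, mul_ite, mul_zero]
    rw [Finset.sum_ite_eq Finset.univ j.2.1]
    simp only [Finset.mem_univ, if_true]
    by_cases h : i.2.1 = j.2.1 <;> simp [h, Complex.star_def]
  rw [hfac]
  exact Matrix.posSemidef_conjTranspose_mul_self _

theorem causal_uncertainty_relation_saturation {d : ℕ} (hd : 2 ≤ d)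
    (Φ : Fin (d * d) → Fin d × Fin d → ℂ) (hΦ : IsMaxEntBasis Φ)
    (i₀ : Fin (d * d)) (hi₀ : (i₀ : ℕ) = 0)
    (J : PMat d d d) (hJdef : J = embAC (projMat (Φ i₀))) :
    IsProcessComb J ∧
    trC J = Matrix.of (fun i j =>
      (if i.1 = j.1 then ((d : ℂ))⁻¹ else 0) * (if i.2 = j.2 then (1 : ℂ) else 0)) ∧
    (∀ i, ccProb 1 1 Φ J i = if i = i₀ then 1 else 0) ∧
    H2 (ccProb 1 1 Φ J) = 0 ∧
    (∀ i, dcProb 1 1 Φ J i = 1 / (d ^ 2 : ℝ)) ∧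
    H2 (dcProb 1 1 Φ J) = 2 * Real.logb 2 d ∧
    H2 (ccProb 1 1 Φ J) + H2 (dcProb 1 1 Φ J) = 2 * Real.logb 2 d := by
  obtain ⟨hON, hTrB, hTrA, _⟩ := hΦ
  have hd0 : d ≠ 0 := by omega
  have hdR : (d : ℝ) ≠ 0 := Nat.cast_ne_zero.mpr hd0
  have hdC : (d : ℂ) ≠ 0 := Nat.cast_ne_zero.mpr hd0
  subst hJdef
  -- common cause distribution
  have hcc : ∀ i, ccProb 1 1 Φ (embAC (projMat (Φ i₀))) i = if i = i₀ then 1 else 0 := by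
    intro i
    simp only [ccProb, prob]
    rw [kronVec_one_one', cc_trace' (Φ i₀) (Φ i), hON i i₀, hON i₀ i]
    by_cases h : i = i₀
    · subst h
      simp only [if_pos rfl, mul_one, Complex.natCast_re]
      simp [hdR]
    · have h' : i₀ ≠ i := fun hh => h hh.symm
      simp [h, h']
  -- direct cause distribution
  have hdc : ∀ i, dcProb 1 1 Φ (embAC (projMat (Φ i₀))) i = 1 / (d ^ 2 : ℝ) := by
    intro i
    simp only [dcProb, prob]
    rw [kronVec_one_one', mixed_trace' (Φ i₀) (Φ i) (hTrA i₀) (by rw [hON i i]; simp)]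
    have hcast : ((1 : ℂ)/d) = (((1/d : ℝ) : ℂ)) := by push_cast; ring
    rw [hcast, Complex.ofReal_re]
    rw [div_mul_div_comm, one_mul, ← pow_two]
  -- partial trace over C
  have htrC : trC (embAC (projMat (Φ i₀))) = Matrix.of (fun i j =>
      (if i.1 = j.1 then ((d : ℂ))⁻¹ else 0) * (if i.2 = j.2 then (1 : ℂ) else 0)) := by
    ext i j
    simp only [trC, Matrix.of_apply, embAC, projMat]
    rw [show (∑ x : Fin d, Φ i₀ (i.1, x) * (starRingEnd ℂ) (Φ i₀ (j.1, x))
        * (if i.2 = j.2 then (1 : ℂ) else 0))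
      = (∑ x : Fin d, Φ i₀ (i.1, x) * (starRingEnd ℂ) (Φ i₀ (j.1, x)))
        * (if i.2 = j.2 then (1 : ℂ) else 0) from (Finset.sum_mul _ _ _).symm]
    rw [hTrB i₀ i.1 j.1, one_div]
  -- entropies
  have hHp : H2 (ccProb 1 1 Φ (embAC (projMat (Φ i₀)))) = 0 := by
    unfold H2
    have hterm : ∀ i, ccProb 1 1 Φ (embAC (projMat (Φ i₀))) i
        * Real.logb 2 (ccProb 1 1 Φ (embAC (projMat (Φ i₀))) i) = 0 := by
      intro i
      rw [hcc i]
      by_cases h : i = i₀ <;> simp [h]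
    rw [Finset.sum_congr rfl fun i _ => hterm i]
    simp
  have hHq : H2 (dcProb 1 1 Φ (embAC (projMat (Φ i₀)))) = 2 * Real.logb 2 d := by
    unfold H2
    have hterm : ∀ i : Fin (d * d), dcProb 1 1 Φ (embAC (projMat (Φ i₀))) i
        * Real.logb 2 (dcProb 1 1 Φ (embAC (projMat (Φ i₀))) i)
        = (1 / (d ^ 2 : ℝ)) * Real.logb 2 (1 / (d ^ 2 : ℝ)) := by
      intro i; rw [hdc i]
    rw [Finset.sum_congr rfl fun i _ => hterm i, Finset.sum_const, Finset.card_univ,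
      Fintype.card_fin, nsmul_eq_mul]
    rw [one_div, Real.logb_inv, Real.logb_pow]
    have hcast : ((d * d : ℕ) : ℝ) = (d : ℝ) ^ 2 := by push_cast; ring
    rw [hcast]
    field_simp
    push_cast; ring
  -- process comb structure
  have hρ : ((d : ℂ)⁻¹ • (1 : Matrix (Fin d) (Fin d) ℂ)).PosSemidef := by
    refine Matrix.PosSemidef.of_dotProduct_mulVec_nonneg ?_ ?_
    · unfold Matrix.IsHermitian
      rw [Matrix.conjTranspose_smul, Matrix.conjTranspose_one]
      congr 1
      simp [Complex.star_def]
    · intro x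
      have hmv : ((d : ℂ)⁻¹ • (1 : Matrix (Fin d) (Fin d) ℂ)).mulVec x = (d : ℂ)⁻¹ • x := by
        rw [Matrix.smul_mulVec, Matrix.one_mulVec]
      rw [hmv, dotProduct_smul]
      have hnn : (0 : ℂ) ≤ (d : ℂ)⁻¹ := by
        have : ((((d : ℝ))⁻¹ : ℝ) : ℂ) = (d : ℂ)⁻¹ := by push_cast; ring
        rw [← this, Complex.zero_le_real]
        positivity
      rw [smul_eq_mul]
      exact mul_nonneg hnn (dotProduct_star_self_nonneg x)
  refine ⟨⟨embAC_proj_posSemidef' _, (d : ℂ)⁻¹ • 1, hρ, ?_, ?_⟩, htrC, hcc, hHp, hdc, hHq, ?_⟩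
  · rw [Matrix.trace_smul, Matrix.trace_one]
    simp only [Fintype.card_fin, smul_eq_mul]
    exact inv_mul_cancel₀ hdC
  · rw [htrC]
    ext i j
    simp [Matrix.smul_apply, Matrix.one_apply, mul_ite, mul_one, mul_zero, ite_mul, zero_mul]
  · rw [hHp, hHq, zero_add]
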